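/- arXiv:2105.10350 — 2 statements merged into one kernel-verified Lean document; each statement's English description precedes it below -/
import Mathlib

section
/- (Correctness of DNA learning from small conditioning sets, partial-correlation form.) Let G be a DAG on a finite vertex set V, let Σ be a positive definite real matrix indexed by V, and fix λ > 0 and an integer K ≥ 0. Assume: (i) (Markov) whenever distinct u,v are d-separated given S ⊆ V∖{u,v} in G, ρ(u,v|S)=0; and (ii) (DNA-faithfulness) for all distinct u,v,z and S ⊆ V∖{u,v,z} with |S| ≤ K, if |ρ(u,v|S)| ≤ λ and |ρ(u,v|S∪{z})| > λ, then u and v are d-separated given S in G. Then for all distinct u,v,z and S ⊆ V∖{u,v,z} with |S| ≤ K such that |ρ(u,v|S)| ≤ λ and |ρ(u,v|S∪{z})| > λ, it holds that z ̸⇝ u, z ̸⇝ v, and z ̸⇝ s for every s ∈ S. -/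
/-! Basic graphical-model definitions: DAGs as binary relations on a finite
vertex type, d-separation via paths (lists of vertices), Markov equivalence,
and definite (non-)ancestral relations. -/

variable {V : Type*}

/-- Two nodes are adjacent in the digraph `E` if there is an edge between them
in either direction. -/
def Adjacent (E : V → V → Prop) (a b : V) : Prop := E a b ∨ E b a

/-- A digraph is acyclic if it has no directed cycles. -/
def Acyclic (E : V → V → Prop) : Prop := ∀ v : V, ¬ Relation.TransGen E v v

/-- `u` is an ancestor of `v`: there is a directed path from `u` to `v`
(by convention, `v` is an ancestor of itself). -/
def Anc (E : V → V → Prop) (u v : V) : Prop := Relation.ReflTransGen E u v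

/-- A list of vertices is a path in the skeleton of `E`: consecutive vertices
are adjacent and no vertex repeats. -/
def IsPath (E : V → V → Prop) (p : List V) : Prop :=
  p.Nodup ∧ List.Chain' (Adjacent E) p

/-- A path `p` is d-connecting given the conditioning set `C` if every collider
on it is an ancestor of an element of `C` and every non-collider on it is
outside `C`.  Interior vertices of `p` are exactly the middle elements `x` of
consecutive triples `[a, x, b]` of `p`; such an `x` is a collider when both
incident edges point into it. -/
def IsDConnectingPath (E : V → V → Prop) (C : Set V) (p : List V) : Prop :=
  ∀ a x b : V, [a, x, b] <:+: p →
    ((E a x ∧ E b x) → ∃ c ∈ C, Anc E x c) ∧ (¬ (E a x ∧ E b x) → x ∉ C)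

/-- `u` and `v` are d-connected given `C` in `E`. -/
def DConn (E : V → V → Prop) (C : Set V) (u v : V) : Prop :=
  ∃ p : List V, IsPath E p ∧ p.head? = some u ∧ p.getLast? = some v ∧
    IsDConnectingPath E C p

/-- `u` and `v` are d-separated given `C` in `E`. -/
def DSep (E : V → V → Prop) (C : Set V) (u v : V) : Prop := ¬ DConn E C u v

/-- Two DAGs on the same vertex set are Markov equivalent if they have exactly
the same d-separation relations. -/
def MarkovEquiv (E E' : V → V → Prop) : Prop :=
  ∀ (u v : V) (C : Set V), u ≠ v → u ∉ C → v ∉ C → (DSep E C u v ↔ DSep E' C u v)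

/-- `u` is definite ancestral to `v` (`u ⇝ v`): `u` is an ancestor of `v` in
every DAG Markov equivalent to `E`. -/
def DefAnc (E : V → V → Prop) (u v : V) : Prop :=
  ∀ E' : V → V → Prop, Acyclic E' → MarkovEquiv E E' → Anc E' u v

/-- `u` is definite non-ancestral to `v` (`u ̸⇝ v`): `u` is not an ancestor of
`v` in any DAG Markov equivalent to `E`. -/
def DefNonAnc (E : V → V → Prop) (u v : V) : Prop :=
  ∀ E' : V → V → Prop, Acyclic E' → MarkovEquiv E E' → ¬ Anc E' u v

/-- The CPDAG of `E` has a directed edge `a → b` iff `a` and `b` are adjacent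
and the edge is oriented `a → b` in every member of the Markov equivalence
class of `E`. -/
def CPDAGDir (E : V → V → Prop) (a b : V) : Prop :=
  Adjacent E a b ∧ ∀ E' : V → V → Prop, Acyclic E' → MarkovEquiv E E' → E' a b

/-- A possibly directed path in the CPDAG of `E`: a path in the skeleton such
that no edge on it is directed backwards (as `x_{i+1} → x_i`) in the CPDAG. -/
def IsPossiblyDirectedPath (E : V → V → Prop) (p : List V) : Prop :=
  p.Nodup ∧ List.Chain' (fun a b => Adjacent E a b ∧ ¬ CPDAGDir E b a) p

/-- A path is unshielded if no three consecutive vertices on it are pairwise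
adjacent. -/
def UnshieldedPath (E : V → V → Prop) (p : List V) : Prop :=
  ∀ a x b : V, [a, x, b] <:+: p → ¬ Adjacent E a b


section helpers
variable {E : V → V → Prop} {C : Set V}

lemma acy_irrefl (hE : Acyclic E) (x : V) : ¬ E x x :=
  fun h => hE x (Relation.TransGen.single h)

lemma acy_asymm (hE : Acyclic E) {a b : V} (h : E a b) : ¬ E b a :=
  fun h' => hE a ((Relation.TransGen.single h).trans (Relation.TransGen.single h'))

lemma anc_of_chain {x : V} {r : List V} (hc : List.Chain E x r) :
    ∀ y ∈ r, Anc E x y := by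
  induction r generalizing x with
  | nil => simp
  | cons d r ih =>
    rcases List.chain_cons.mp hc with ⟨hxd, hc'⟩
    intro y hy
    rcases List.mem_cons.mp hy with rfl | hy
    · exact Relation.ReflTransGen.single hxd
    · exact (Relation.ReflTransGen.single hxd).trans (ih hc' y hy)

lemma exists_dup_split {p : List V} (h : ¬ p.Nodup) :
    ∃ (x : V) (l₁ l₂ l₃ : List V), p = l₁ ++ x :: (l₂ ++ x :: l₃) := by
  induction p with
  | nil => exact absurd List.nodup_nil h
  | cons a p ih =>
    by_cases ha : a ∈ p
    · rcases List.append_of_mem ha with ⟨s, t, rfl⟩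
      exact ⟨a, [], s, t, rfl⟩
    · have : ¬ p.Nodup := fun hn => h (List.nodup_cons.mpr ⟨ha, hn⟩)
      rcases ih this with ⟨x, l₁, l₂, l₃, rfl⟩
      exact ⟨x, a :: l₁, l₂, l₃, rfl⟩

lemma triple_split {a y b : V} : ∀ {t₁ t₂ : List V}, [a, y, b] <:+: t₁ ++ t₂ →
    [a, y, b] <:+: t₁ ∨ [a, y, b] <:+: t₂ ∨
    ([a, y] <:+ t₁ ∧ [b] <+: t₂) ∨ ([a] <:+ t₁ ∧ [y, b] <+: t₂) := by
  intro t₁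
  induction t₁ with
  | nil => intro t₂ h; exact Or.inr (Or.inl (by simpa using h))
  | cons c t₁' ih =>
    intro t₂ h
    rw [List.cons_append] at h
    rcases List.infix_cons_iff.mp h with hp | hi
    · rcases List.cons_prefix_cons.mp hp with ⟨rfl, hp1⟩
      match t₁', hp1 with
      | [], hp1 =>
        exact Or.inr (Or.inr (Or.inr ⟨List.suffix_refl [a], by simpa using hp1⟩))
      | [d], hp1 =>
        rcases List.cons_prefix_cons.mp (by simpa using hp1) with ⟨rfl, hp2⟩
        exact Or.inr (Or.inr (Or.inl ⟨List.suffix_refl [a, y], hp2⟩))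
      | d :: e :: t₁'', hp1 =>
        rw [List.cons_append, List.cons_append] at hp1
        rcases List.cons_prefix_cons.mp hp1 with ⟨rfl, hp2⟩
        rcases List.cons_prefix_cons.mp hp2 with ⟨rfl, _⟩
        exact Or.inl ⟨[], t₁'', rfl⟩
    · rcases ih hi with h1 | h2 | ⟨h3, h3'⟩ | ⟨h4, h4'⟩
      · exact Or.inl (List.infix_cons h1)
      · exact Or.inr (Or.inl h2)
      · exact Or.inr (Or.inr (Or.inl ⟨h3.trans (List.suffix_cons c t₁'), h3'⟩))
      · exact Or.inr (Or.inr (Or.inr ⟨h4.trans (List.suffix_cons c t₁'), h4'⟩))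

lemma flip_collider (hE : Acyclic E) (x : V) :
    ∀ (l : List V) (y z w0 : V), List.Chain' (Adjacent E) (y :: z :: l) → E y z →
      Anc E x y → (y :: z :: l).getLast? = some w0 → Anc E w0 x →
      ∃ a b c : V, [a, b, c] <:+: (y :: z :: l) ∧ E a b ∧ E c b ∧ Anc E x b := by
  intro l
  induction l with
  | nil =>
    intro y z w0 hch hyz hxy hlast hw0
    exfalso
    have : w0 = z := by simpa using hlast.symm
    subst this
    exact hE x (Relation.TransGen.trans_right hxy (Relation.TransGen.head' hyz hw0))
  | cons w l ih =>
    intro y z w0 hch hyz hxy hlast hw0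
    have hch' : List.Chain' (Adjacent E) (z :: w :: l) := (List.isChain_cons_cons.mp hch).2
    have hadj : Adjacent E z w := (List.isChain_cons_cons.mp hch').1
    by_cases hwz : E w z
    · exact ⟨y, z, w, ⟨[], l, rfl⟩, hyz, hwz, hxy.trans (Relation.ReflTransGen.single hyz)⟩
    · have hzw : E z w := hadj.resolve_right hwz
      have hxz : Anc E x z := hxy.trans (Relation.ReflTransGen.single hyz)
      have hlast' : (z :: w :: l).getLast? = some w0 := by
        rwa [List.getLast?_cons_cons] at hlast
      obtain ⟨a, b, c, hinf, h1, h2, h3⟩ := ih z w w0 hch' hzw hxz hlast' hw0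
      exact ⟨a, b, c, hinf.trans (List.suffix_cons y _).isInfix, h1, h2, h3⟩

lemma getLast?_append_ne_nil {l₁ l₂ : List V} (h : l₂ ≠ []) :
    (l₁ ++ l₂).getLast? = l₂.getLast? := by
  obtain ⟨y, hy⟩ := Option.isSome_iff_exists.mp (List.getLast?_isSome.mpr h)
  rw [List.getLast?_append, hy]; rfl

lemma walk_to_path (hE : Acyclic E) :
    ∀ (n : ℕ) (p : List V), p.length ≤ n → List.Chain' (Adjacent E) p →
      IsDConnectingPath E C p →
      ∃ q : List V, q.Nodup ∧ List.Chain' (Adjacent E) q ∧ q.head? = p.head? ∧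
        q.getLast? = p.getLast? ∧ IsDConnectingPath E C q := by
  intro n
  induction n with
  | zero =>
    intro p hlen hch hdc
    have : p = [] := List.eq_nil_of_length_eq_zero (Nat.le_zero.mp hlen)
    subst this
    exact ⟨[], List.nodup_nil, List.isChain_nil, rfl, rfl, hdc⟩
  | succ n ih =>
    intro p hlen hch hdc
    by_cases hnd : p.Nodup
    · exact ⟨p, hnd, hch, rfl, rfl, hdc⟩
    obtain ⟨x, p₁, p₂, p₃, rfl⟩ := exists_dup_split hnd
    have hp2 : p₂ ≠ [] := by
      rintro rfl
      have hinf : [x, x] <:+: (p₁ ++ x :: ([] ++ x :: p₃)) := ⟨p₁, p₃, by simp⟩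
      have hxx : Adjacent E x x := List.isChain_pair.mp (hch.infix hinf)
      exact acy_irrefl hE x (hxx.elim id id)
    -- abbreviation
    have hsfx : (x :: p₃) <:+ (p₁ ++ x :: (p₂ ++ x :: p₃)) := ⟨p₁ ++ x :: p₂, by simp⟩
    have hchx3 : List.Chain' (Adjacent E) (x :: p₃) := hch.infix hsfx.isInfix
    have hchA : List.Chain' (Adjacent E) (p₁ ++ [x]) :=
      hch.infix ⟨[], p₂ ++ x :: p₃, by simp⟩
    have hchq : List.Chain' (Adjacent E) ((p₁ ++ [x]) ++ p₃) := by
      refine List.isChain_append.mpr ⟨hchA, (List.isChain_cons.mp hchx3).2, ?_⟩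
      intro α hα y hy
      rw [List.getLast?_concat] at hα
      simp only [Option.mem_def, Option.some.injEq] at hα
      subst hα
      exact (List.isChain_cons.mp hchx3).1 y hy
    have hhead : ((p₁ ++ [x]) ++ p₃).head? = (p₁ ++ x :: (p₂ ++ x :: p₃)).head? := by
      cases p₁ <;> simp
    have hlast_eq : ((p₁ ++ [x]) ++ p₃).getLast? = (p₁ ++ x :: (p₂ ++ x :: p₃)).getLast? := by
      cases p₃ with
      | nil =>
        have e1 : p₁ ++ x :: (p₂ ++ x :: ([] : List V)) = (p₁ ++ x :: p₂) ++ [x] := by simp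
        rw [e1, List.getLast?_concat]
        simp [List.getLast?_concat]
      | cons d p₃' =>
        have e1 : p₁ ++ x :: (p₂ ++ x :: (d :: p₃')) = (p₁ ++ x :: p₂ ++ [x]) ++ (d :: p₃') := by
          simp
        rw [e1, getLast?_append_ne_nil (List.cons_ne_nil d p₃'),
          getLast?_append_ne_nil (List.cons_ne_nil d p₃')]
    have hdcq : IsDConnectingPath E C ((p₁ ++ [x]) ++ p₃) := by
      intro α y β hinf
      rcases triple_split hinf with h1 | h2 | ⟨h3, h3'⟩ | ⟨h4, h4'⟩
      · exact hdc α y β (h1.trans ⟨[], p₂ ++ x :: p₃, by simp⟩)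
      · exact hdc α y β (h2.trans ⟨p₁ ++ x :: p₂ ++ [x], [], by simp⟩)
      · -- junction case : y = x
        obtain ⟨l, hl⟩ := h3
        have hl' : (l ++ [α]) ++ [y] = p₁ ++ [x] := by simpa using hl
        obtain ⟨hp₁, hy⟩ := List.append_inj' hl' rfl
        have hyx : y = x := by injection hy
        subst hyx
        obtain ⟨t, ht⟩ := h3'
        obtain ⟨w', p₂', rfl⟩ : ∃ w' p₂', p₂ = w' :: p₂' := by
          cases p₂ with
          | nil => exact absurd rfl hp2
          | cons w' p₂' => exact ⟨w', p₂', rfl⟩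
        have T1 : [α, y, w'] <:+: (p₁ ++ y :: (w' :: p₂' ++ y :: p₃)) :=
          ⟨l, p₂' ++ y :: p₃, by rw [← hp₁]; simp⟩
        rcases List.eq_nil_or_concat (w' :: p₂') with hcontra | ⟨p₂'', w₂, hw₂⟩
        · exact absurd hcontra (List.cons_ne_nil w' p₂')
        have T2 : [w₂, y, β] <:+: (p₁ ++ y :: (w' :: p₂' ++ y :: p₃)) := by
          refine ⟨p₁ ++ y :: p₂'', t, ?_⟩
          rw [List.concat_eq_append] at hw₂
          rw [hw₂, ← ht]
          simp
        have hadj_xw : Adjacent E y w' :=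
          (List.isChain_cons_cons.mp (List.isChain_cons_cons.mp (hch.infix T1)).2).1
        constructor
        · rintro ⟨hax, hbx⟩
          by_cases hw' : E w' y
          · exact (hdc α y w' T1).1 ⟨hax, hw'⟩
          · have hxw' : E y w' := hadj_xw.resolve_right hw'
            have hseginf : (y :: w' :: (p₂' ++ [y])) <:+: (p₁ ++ y :: (w' :: p₂' ++ y :: p₃)) :=
              ⟨p₁, p₃, by simp⟩
            have hchseg := hch.infix hseginf
            have hlastseg : (y :: w' :: (p₂' ++ [y])).getLast? = some y := by
              have e2 : y :: w' :: (p₂' ++ [y]) = (y :: w' :: p₂') ++ [y] := by simp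
              rw [e2, List.getLast?_concat]
            obtain ⟨a', b', c', hinf3, h1', h2', h3'⟩ :=
              flip_collider hE y (p₂' ++ [y]) y w' y hchseg hxw'
                Relation.ReflTransGen.refl hlastseg Relation.ReflTransGen.refl
            obtain ⟨c, hc, hbc⟩ := (hdc a' b' c' (hinf3.trans hseginf)).1 ⟨h1', h2'⟩
            exact ⟨c, hc, h3'.trans hbc⟩
        · intro hnc
          by_cases hax : E α y
          · have hbx : ¬ E β y := fun h => hnc ⟨hax, h⟩
            exact (hdc w₂ y β T2).2 (fun h => hbx h.2)
          · exact (hdc α y w' T1).2 (fun h => hax h.1)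
      · -- α = x case
        obtain ⟨l, hl⟩ := h4
        obtain ⟨hlp, hαx⟩ := List.append_inj' hl rfl
        have hαx' : α = x := by injection hαx
        subst hαx'
        obtain ⟨t, ht⟩ := h4'
        exact hdc α y β ⟨p₁ ++ α :: p₂, t, by rw [← ht]; simp⟩
    have hlq : ((p₁ ++ [x]) ++ p₃).length ≤ n := by
      simp only [List.length_append, List.length_cons] at hlen ⊢
      simp at hlen ⊢
      omega
    obtain ⟨q', hnd', hch', hh', hl', hdc'⟩ := ih ((p₁ ++ [x]) ++ p₃) hlq hchq hdcq
    exact ⟨q', hnd', hch', hh'.trans hhead, hl'.trans hlast_eq, hdc'⟩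


lemma dconn_of_walk (hE : Acyclic E) {p : List V} {u v : V}
    (hch : List.Chain' (Adjacent E) p) (hdc : IsDConnectingPath E C p)
    (hh : p.head? = some u) (hl : p.getLast? = some v) : DConn E C u v := by
  obtain ⟨q, hnd, hch', hh', hl', hdc'⟩ := walk_to_path hE p.length p le_rfl hch hdc
  exact ⟨q, ⟨hnd, hch'⟩, hh'.trans hh, hl'.trans hl, hdc'⟩

lemma dconn_symm {u v : V} (h : DConn E C u v) : DConn E C v u := by
  obtain ⟨p, ⟨hnd, hch⟩, hh, hl, hdc⟩ := h
  refine ⟨p.reverse, ⟨List.nodup_reverse.mpr hnd, ?_⟩, ?_, ?_, ?_⟩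
  · exact List.isChain_reverse.mpr (List.IsChain.imp (fun a b hab => hab.symm) hch)
  · rw [List.head?_reverse]; exact hl
  · rw [List.getLast?_reverse]; exact hh
  · intro a x b hinf
    have hinf' : [b, x, a] <:+: p := by
      rw [← List.reverse_infix]; simpa using hinf
    obtain ⟨h1, h2⟩ := hdc b x a hinf'
    exact ⟨fun hc => h1 ⟨hc.2, hc.1⟩, fun hn => h2 (fun hc => hn ⟨hc.2, hc.1⟩)⟩

lemma dconn_keep {z s u v : V} (hzs : Anc E z s) (hs : s ∈ C)
    (h : DConn E (insert z C) u v) : DConn E C u v := by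
  obtain ⟨p, hp, hh, hl, hdc⟩ := h
  refine ⟨p, hp, hh, hl, ?_⟩
  intro a x b hinf
  obtain ⟨h1, h2⟩ := hdc a x b hinf
  constructor
  · intro hcol
    obtain ⟨c, hc, hxc⟩ := h1 hcol
    rcases Set.mem_insert_iff.mp hc with rfl | hcC
    · exact ⟨s, hs, hxc.trans hzs⟩
    · exact ⟨c, hcC, hxc⟩
  · intro hnc hxC; exact h2 hnc (Set.mem_insert_of_mem z hxC)

lemma dconn_shrink (hE : Acyclic E) {z u v : V} (hzu : Anc E z u)
    (h : DConn E (insert z C) u v) : DConn E C u v := by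
  classical
  obtain ⟨p, ⟨hnd, hch⟩, hh, hl, hdc⟩ := h
  by_cases hP : ∃ k, ∃ (p₀ : List V) (a x b : V) (p₁ : List V),
      p₀ ++ [a, x, b] ++ p₁ = p ∧ E a x ∧ E b x ∧
      (¬ ∃ c ∈ C, Anc E x c) ∧ p₁.length = k
  case neg =>
    refine ⟨p, ⟨hnd, hch⟩, hh, hl, ?_⟩
    intro a x b hinf
    obtain ⟨h1, h2⟩ := hdc a x b hinf
    constructor
    · intro hcol
      by_contra hno
      obtain ⟨s, t, hst⟩ := hinf
      exact hP ⟨t.length, s, a, x, b, t, hst, hcol.1, hcol.2, hno, rfl⟩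
    · intro hnc
      exact fun hxC => h2 hnc (Set.mem_insert_of_mem z hxC)
  case pos =>
    obtain ⟨p₀, a, x, b, p₁, hpeq, hax, hbx, hbad, hk⟩ := Nat.find_spec hP
    have hinfaxb : [a, x, b] <:+: p := ⟨p₀, p₁, hpeq⟩
    obtain ⟨c, hc, hxc⟩ := (hdc a x b hinfaxb).1 ⟨hax, hbx⟩
    have hxz : Anc E x z := by
      rcases Set.mem_insert_iff.mp hc with rfl | hcC
      · exact hxc
      · exact absurd ⟨c, hcC, hxc⟩ hbad
    have hxu : Anc E x u := hxz.trans hzu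
    obtain ⟨r, hchr, hlastr⟩ := List.exists_isChain_cons_of_relationReflTransGen hxu
    have hchr' : List.Chain' E (x :: r) := hchr
    have hlastr? : (x :: r).getLast? = some u := by
      rw [List.getLast?_eq_getLast (List.cons_ne_nil x r), hlastr]
    have havoid : ∀ y ∈ x :: r, y ∉ C := by
      intro y hy hyC
      apply hbad
      rcases List.mem_cons.mp hy with rfl | hy'
      · exact ⟨y, hyC, Relation.ReflTransGen.refl⟩
      · exact ⟨y, hyC, anc_of_chain hchr y hy'⟩
    have hsuffxbp : (x :: b :: p₁) <:+ p := ⟨p₀ ++ [a], by rw [← hpeq]; simp⟩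
    have inner : ∀ α y β : V, [α, y, β] <:+: (x :: b :: p₁) →
        ((E α y ∧ E β y) → ∃ c ∈ C, Anc E y c) ∧ (¬ (E α y ∧ E β y) → y ∉ C) := by
      intro α y β hinf'
      have hinfp : [α, y, β] <:+: p := hinf'.trans hsuffxbp.isInfix
      obtain ⟨h1, h2⟩ := hdc α y β hinfp
      constructor
      · intro hcol
        by_contra hno
        obtain ⟨s, t, hst⟩ := hinf'
        have hlen3 := congrArg List.length hst
        simp [List.length_append] at hlen3
        have hlt : t.length < Nat.find hP := by omega
        have hPt : ∃ (p₀' : List V) (a' x' b' : V) (p₁' : List V),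
            p₀' ++ [a', x', b'] ++ p₁' = p ∧ E a' x' ∧ E b' x' ∧
            (¬ ∃ c ∈ C, Anc E x' c) ∧ p₁'.length = t.length :=
          ⟨p₀ ++ [a] ++ s, α, y, β, t, by rw [← hpeq, show p₀ ++ [a, x, b] ++ p₁ = p₀ ++ [a] ++ (x :: b :: p₁) from by simp, ← hst]; simp, hcol.1, hcol.2, hno, rfl⟩
        exact Nat.find_min hP hlt hPt
      · intro hnc
        exact fun hyC => h2 hnc (Set.mem_insert_of_mem z hyC)
    apply dconn_of_walk hE (p := (x :: r).reverse ++ (b :: p₁)) (C := C)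
    · -- chain'
      refine List.isChain_append.mpr ⟨?_, ?_, ?_⟩
      · exact List.isChain_reverse.mpr (List.IsChain.imp (fun a' b' h' => Or.inr h') hchr')
      · exact (List.isChain_cons_cons.mp (hch.infix hsuffxbp.isInfix)).2
      · intro α hα y hy
        rw [List.getLast?_reverse] at hα
        simp only [List.head?_cons, Option.mem_def, Option.some.injEq] at hα hy
        subst hα; subst hy
        exact Or.inr hbx
    · -- d-connecting
      intro α y β hinf
      rcases triple_split hinf with h1 | h2 | ⟨h3, h3'⟩ | ⟨h4, h4'⟩
      · have h1' : [β, y, α] <:+: (x :: r) := by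
          rw [← List.reverse_infix]; simpa using h1
        have hcc : List.Chain' E [β, y, α] := hchr'.infix h1'
        have hyα : E y α := List.isChain_pair.mp (List.isChain_cons_cons.mp hcc).2
        constructor
        · intro hcol; exact absurd hcol.1 (acy_asymm hE hyα)
        · intro _; exact havoid y (h1'.subset (by simp))
      · exact inner α y β (List.infix_cons h2)
      · have h3r : [y, α] <+: (x :: r) := by
          rw [← List.reverse_suffix]; simpa using h3
        obtain ⟨rfl, hα⟩ := List.cons_prefix_cons.mp h3r
        obtain ⟨r', hr'⟩ := hα
        have hxα : E y α := by
          have hcy : List.Chain E y r := hchr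
          rw [← hr'] at hcy
          exact (List.chain_cons.mp hcy).1
        constructor
        · intro hcol; exact absurd hcol.1 (acy_asymm hE hxα)
        · intro _; exact havoid y (List.mem_cons_self)
      · have h4r : α = x := by
          have h4p : [α] <+: (x :: r) := by rw [← List.reverse_suffix]; simpa using h4
          exact (List.cons_prefix_cons.mp h4p).1
        subst h4r
        obtain ⟨t, ht⟩ := h4'
        exact inner α y β ⟨[], t, by rw [← ht]; simp⟩
    · -- head?
      have h1 : (x :: r).reverse.head? = some u := by
        rw [List.head?_reverse]; exact hlastr?
      cases hrev : (x :: r).reverse with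
      | nil => rw [hrev] at h1; simp at h1
      | cons c' s' =>
        rw [hrev] at h1
        simpa using h1
    · -- getLast?
      rw [getLast?_append_ne_nil (List.cons_ne_nil b p₁)]
      have e : (p₀ ++ [a, x]) ++ (b :: p₁) = p := by rw [← hpeq]; simp
      rw [← hl, ← e, getLast?_append_ne_nil (List.cons_ne_nil b p₁)]

end helpers


/-- The partial correlation `ρ(u, v | S)` computed from the covariance matrix
`Cov`: with `Θ` the inverse of the principal submatrix of `Cov` on
`{u, v} ∪ S`, it equals `-Θ_{uv} / √(Θ_{uu} Θ_{vv})`. -/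
noncomputable def partialCorr [Fintype V] [DecidableEq V] (Cov : Matrix V V ℝ)
    (u v : V) (S : Finset V) : ℝ :=
  let T : Finset V := insert u (insert v S);
  let Th : Matrix T T ℝ := (Cov.submatrix (fun i : T => (i : V)) (fun i : T => (i : V)))⁻¹;
  let hu : u ∈ T := Finset.mem_insert_self u _;
  let hv : v ∈ T := Finset.mem_insert_of_mem (Finset.mem_insert_self v S);
  -Th ⟨u, hu⟩ ⟨v, hv⟩ / Real.sqrt (Th ⟨u, hu⟩ ⟨u, hu⟩ * Th ⟨v, hv⟩ ⟨v, hv⟩)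

/-- Theorem 2, correctness of DNA learning from small
conditioning sets, partial-correlation form. -/
theorem stmt7 [Fintype V] [DecidableEq V] (E : V → V → Prop) (hE : Acyclic E)
    (Cov : Matrix V V ℝ) (hCov : Cov.PosDef) (lam : ℝ) (hlam : 0 < lam) (K : ℕ)
    (hMarkov : ∀ (u v : V) (S : Finset V), u ≠ v → u ∉ S → v ∉ S →
      DSep E (↑S : Set V) u v → partialCorr Cov u v S = 0)
    (hFaith : ∀ (u v z : V) (S : Finset V), u ≠ v → u ≠ z → v ≠ z →
      u ∉ S → v ∉ S → z ∉ S → S.card ≤ K →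
      |partialCorr Cov u v S| ≤ lam → lam < |partialCorr Cov u v (insert z S)| →
      DSep E (↑S : Set V) u v) :
    ∀ (u v z : V) (S : Finset V), u ≠ v → u ≠ z → v ≠ z →
      u ∉ S → v ∉ S → z ∉ S → S.card ≤ K →
      |partialCorr Cov u v S| ≤ lam → lam < |partialCorr Cov u v (insert z S)| →
      DefNonAnc E z u ∧ DefNonAnc E z v ∧ ∀ s ∈ S, DefNonAnc E z s := by
  intro u v z S huv huz hvz huS hvS hzS hK h1 h2
  have hdsep : DSep E (↑S : Set V) u v := hFaith u v z S huv huz hvz huS hvS hzS hK h1 h2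
  have key : ∀ E' : V → V → Prop, Acyclic E' → MarkovEquiv E E' →
      (DConn E' (insert z (↑S : Set V)) u v → DConn E' (↑S : Set V) u v) → False := by
    intro E' hAc hME hdrop
    have hds1 : DSep E' (↑S : Set V) u v :=
      (hME u v (↑S : Set V) huv (by simpa using huS) (by simpa using hvS)).mp hdsep
    have hds2 : DSep E' (insert z (↑S : Set V)) u v := fun hcon => hds1 (hdrop hcon)
    have hds3 : DSep E (insert z (↑S : Set V)) u v := by
      refine (hME u v (insert z (↑S : Set V)) huv ?_ ?_).mpr hds2
      · intro hmem
        rcases Set.mem_insert_iff.mp hmem with h' | h'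
        · exact huz h'
        · exact huS (by simpa using h')
      · intro hmem
        rcases Set.mem_insert_iff.mp hmem with h' | h'
        · exact hvz h'
        · exact hvS (by simpa using h')
    have h0 : partialCorr Cov u v (insert z S) = 0 := by
      apply hMarkov u v (insert z S) huv
      · intro hmem
        rcases Finset.mem_insert.mp hmem with h' | h'
        · exact huz h'
        · exact huS h'
      · intro hmem
        rcases Finset.mem_insert.mp hmem with h' | h'
        · exact hvz h'
        · exact hvS h'
      · rw [Finset.coe_insert]; exact hds3
    rw [h0] at h2
    simp only [abs_zero] at h2
    exact absurd h2 (not_lt.mpr hlam.le)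
  refine ⟨?_, ?_, ?_⟩
  · intro E' hAc hME hAnc
    exact key E' hAc hME (fun hcon => dconn_shrink hAc hAnc hcon)
  · intro E' hAc hME hAnc
    exact key E' hAc hME (fun hcon => dconn_symm (dconn_shrink hAc hAnc (dconn_symm hcon)))
  · intro s hs E' hAc hME hAnc
    exact key E' hAc hME (fun hcon => dconn_keep hAnc (Finset.mem_coe.mpr hs) hcon)
end

section
/- Let G=(V,E) be a DAG, let u,v,x be distinct vertices, and let W ⊆ V∖{u,v,x}. If u and v are d-separated given W in G but d-connected given W∪{x} in G, then x and u are d-connected given W in G, and x and v are d-connected given W in G. -/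
/-! Basic graphical-model definitions: DAGs as binary relations on a finite
vertex type, d-separation via paths (lists of vertices), Markov equivalence,
and definite (non-)ancestral relations. -/

variable {V : Type*}

section Aux

variable {E : V → V → Prop}

/-- A triple that is an infix of an append splits into four cases. -/
lemma triple_infix_append {a m b : V} {l1 l2 : List V}
    (h : [a, m, b] <:+: l1 ++ l2) :
    [a, m, b] <:+: l1 ∨ [a, m, b] <:+: l2 ∨
      ([a, m] <:+ l1 ∧ l2.head? = some b) ∨
      (l1.getLast? = some a ∧ [m, b] <+: l2) := by
  induction l1 with
  | nil => exact Or.inr (Or.inl (by simpa using h))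
  | cons y l1 ih =>
    rw [List.cons_append, List.infix_cons_iff] at h
    rcases h with h | h
    · obtain ⟨t, ht⟩ := h
      rcases l1 with _ | ⟨p1, l1'⟩
      · simp only [List.cons_append, List.nil_append, List.cons.injEq] at ht
        obtain ⟨rfl, hl2⟩ := ht
        exact Or.inr (Or.inr (Or.inr ⟨by simp, ⟨t, hl2⟩⟩))
      · rcases l1' with _ | ⟨p2, l1''⟩
        · simp only [List.cons_append, List.nil_append, List.cons.injEq] at ht
          obtain ⟨rfl, rfl, hl2⟩ := ht
          refine Or.inr (Or.inr (Or.inl ⟨List.suffix_refl _, ?_⟩))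
          rw [← hl2]; rfl
        · simp only [List.cons_append, List.cons.injEq] at ht
          obtain ⟨rfl, rfl, rfl, _⟩ := ht
          exact Or.inl ⟨[], l1'', by simp⟩
    · rcases ih h with h | h | ⟨h1, h2⟩ | ⟨h1, h2⟩
      · exact Or.inl (List.infix_cons h)
      · exact Or.inr (Or.inl h)
      · exact Or.inr (Or.inr (Or.inl ⟨h1.trans (List.suffix_cons y l1), h2⟩))
      · refine Or.inr (Or.inr (Or.inr ⟨?_, h2⟩))
        have hne : l1 ≠ [] := by rintro rfl; simp at h1
        rw [show y :: l1 = [y] ++ l1 from rfl, List.getLast?_append_of_ne_nil _ hne]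
        exact h1

/-- From an ancestral relation extract a directed path as a nodup list. -/
lemma exists_dirList (hE : Acyclic E) {c x : V} (h : Anc E c x) :
    ∃ L : List V, List.Chain' E L ∧ L.Nodup ∧ L.head? = some c ∧
      L.getLast? = some x ∧ ∀ m ∈ L, Anc E c m := by
  have h' : Relation.ReflTransGen E c x := h
  clear h
  induction h' using Relation.ReflTransGen.head_induction_on with
  | refl =>
    refine ⟨[x], List.isChain_singleton x, by simp, rfl, by simp, ?_⟩
    intro m hm
    simp only [List.mem_singleton] at hm
    subst hm
    exact Relation.ReflTransGen.refl
  | @head a b' hab hbx ih =>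
    obtain ⟨L, hch, hnd, hhd, hlst, hmem⟩ := ih
    refine ⟨a :: L, ?_, ?_, rfl, ?_, ?_⟩
    · refine List.isChain_cons.mpr ?_
      refine ⟨?_, hch⟩
      intro y hy
      rw [hhd] at hy
      obtain rfl : b' = y := by simpa using hy
      exact hab
    · rw [List.nodup_cons]
      refine ⟨?_, hnd⟩
      intro haL
      exact hE a (Relation.TransGen.head' hab (hmem a haL))
    · rcases L with _ | ⟨y, L'⟩
      · simp at hhd
      · rw [List.getLast?_cons_cons]; exact hlst
    · intro m hm
      rcases List.mem_cons.mp hm with rfl | hm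
      · exact Relation.ReflTransGen.refl
      · exact Relation.ReflTransGen.head hab (hmem m hm)

/-- First element of `R` that belongs to `S`. -/
lemma exists_first_mem {S : List V} :
    ∀ R : List V, (∃ r ∈ R, r ∈ S) →
      ∃ R1 z R2, R = R1 ++ z :: R2 ∧ z ∈ S ∧ ∀ r ∈ R1, r ∉ S := by
  intro R
  induction R with
  | nil => rintro ⟨r, hr, -⟩; simp at hr
  | cons y R ih =>
    intro h
    by_cases hy : y ∈ S
    · exact ⟨[], y, R, rfl, hy, by simp⟩
    · obtain ⟨r, hr, hrS⟩ := h
      have hr' : r ∈ R := by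
        rcases List.mem_cons.mp hr with rfl | hr''
        · exact absurd hrS hy
        · exact hr''
      obtain ⟨R1, z, R2, he, hz, hR1⟩ := ih ⟨r, hr', hrS⟩
      refine ⟨y :: R1, z, R2, by rw [he, List.cons_append], hz, ?_⟩
      intro r' hr'
      rcases List.mem_cons.mp hr' with rfl | hr''
      · exact hy
      · exact hR1 r' hr''

/-- d-connection is symmetric. -/
lemma DConn.symm {C : Set V} {u v : V} (h : DConn E C u v) : DConn E C v u := by
  obtain ⟨p, ⟨hnd, hch⟩, hh, hl, hdc⟩ := h
  refine ⟨p.reverse, ⟨List.nodup_reverse.mpr hnd, ?_⟩, ?_, ?_, ?_⟩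
  · exact List.isChain_reverse.mpr (hch.imp fun a b hab => hab.symm)
  · rw [List.head?_reverse]; exact hl
  · rw [List.getLast?_reverse]; exact hh
  · intro a m b hinf
    have hinf' : [b, m, a] <:+: p := by
      rw [← List.reverse_infix]; simpa using hinf
    have h2 := hdc b m a hinf'
    exact ⟨fun hc => h2.1 ⟨hc.2, hc.1⟩, fun hnc => h2.2 fun hc => hnc ⟨hc.2, hc.1⟩⟩

/-- Main step: if `u,v` are d-separated given `W` but d-connected given
`W ∪ {x}`, then `x` is d-connected to `u` given `W`. -/
lemma dconn_step (hE : Acyclic E) {u v x : V} {W : Set V}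
    (hsep : DSep E W u v) (hconn : DConn E (W ∪ {x}) u v) :
    DConn E W x u := by
  classical
  obtain ⟨p, ⟨hnd, hch⟩, hhead, hlast, hdc⟩ := hconn
  have hndc : ¬ IsDConnectingPath E W p := fun h => hsep ⟨p, ⟨hnd, hch⟩, hhead, hlast, h⟩
  -- there is a "bad collider": a collider which is an ancestor of x but of nothing in W
  have hex : ∃ n : ℕ, ∃ (s : List V) (α m β : V) (t : List V),
      p = s ++ α :: m :: β :: t ∧ s.length = n ∧ E α m ∧ E β m ∧ Anc E m x ∧
        ∀ w ∈ W, ¬ Anc E m w := by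
    by_contra hno
    push_neg at hno
    apply hndc
    intro a m b hinf
    constructor
    · intro hcol
      obtain ⟨w, hw, hanc⟩ := (hdc a m b hinf).1 hcol
      rw [Set.mem_union, Set.mem_singleton_iff] at hw
      rcases hw with hw | rfl
      · exact ⟨w, hw, hanc⟩
      · obtain ⟨s, t, hst⟩ := hinf
        exact hno s.length s a m b t (by rw [← hst]; simp) rfl hcol.1 hcol.2 hanc
    · intro hncol hmW
      exact (hdc a m b hinf).2 hncol (Set.mem_union_left _ hmW)
  obtain ⟨s, a, c, b, t, hp, hslen, hEac, hEbc, hcx, hcW⟩ := Nat.find_spec hex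
  -- minimality of the first bad collider
  have key : ∀ (s' : List V) (α m β : V) (t' : List V), s'.length < Nat.find hex →
      p = s' ++ α :: m :: β :: t' →
      ((E α m ∧ E β m) → ∃ w ∈ W, Anc E m w) ∧ (¬ (E α m ∧ E β m) → m ∉ W) := by
    intro s' α m β t' hlt hp'
    have hinf : [α, m, β] <:+: p := ⟨s', t', by rw [hp']; simp⟩
    have hnQ := Nat.find_min hex hlt
    constructor
    · intro hcol
      obtain ⟨w, hw, hanc⟩ := (hdc α m β hinf).1 hcol
      rw [Set.mem_union, Set.mem_singleton_iff] at hw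
      rcases hw with hw | rfl
      · exact ⟨w, hw, hanc⟩
      · by_contra hcon
        push_neg at hcon
        exact hnQ ⟨s', α, m, β, t', hp', rfl, hcol.1, hcol.2, hanc, hcon⟩
    · intro hncol hmW
      exact (hdc α m β hinf).2 hncol (Set.mem_union_left _ hmW)
  -- the initial segment S of p ending at the bad collider c
  have hpS : p = (s ++ [a, c]) ++ b :: t := by rw [hp]; simp
  have hSpre : (s ++ [a, c]) <+: p := ⟨b :: t, hpS.symm⟩
  have hSnd : (s ++ [a, c]).Nodup := List.Nodup.sublist hSpre.sublist hnd
  have hcS : c ∈ s ++ [a, c] := by simp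
  -- a directed nodup path L from c to x
  obtain ⟨L, hLch, hLnd, hLhead, hLlast, hLmem⟩ := exists_dirList hE hcx
  have hcL : c ∈ L := by
    rcases L with _ | ⟨y, L'⟩
    · simp at hLhead
    · simp only [List.head?_cons, Option.some.injEq] at hLhead
      rw [hLhead]; simp
  have hcR : c ∈ L.reverse := List.mem_reverse.mpr hcL
  -- first vertex z of L.reverse that meets S
  obtain ⟨R1, z, R2, hR, hzS, hR1⟩ := exists_first_mem L.reverse ⟨c, hcR, hcS⟩
  obtain ⟨S1, S2, hS12⟩ := List.append_of_mem hzS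
  -- basic facts
  have hprefR : R1 ++ [z] <+: L.reverse := ⟨R2, by rw [hR]; simp⟩
  have hmemL : ∀ m ∈ R1 ++ [z], m ∈ L := by
    intro m hm
    have : m ∈ L.reverse := hprefR.subset hm
    exact List.mem_reverse.mp this
  have hnotW : ∀ m ∈ L, m ∉ W := fun m hm hmW => hcW m hmW (hLmem m hm)
  -- treatment of triples inside the reversed directed part
  have hRtrip : ∀ a' m b' : V, [a', m] <:+: L.reverse →
      ((E a' m ∧ E b' m) → ∃ w ∈ W, Anc E m w) ∧ (¬ (E a' m ∧ E b' m) → m ∉ W) := by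
    intro a' m b' hpair
    have hpair' : [m, a'] <:+: L := by
      rw [← List.reverse_infix]; simpa using hpair
    have hma : E m a' := by
      have h2 := hLch.infix hpair'
      rw [List.isChain_cons] at h2
      exact h2.1 a' rfl
    have hmL : m ∈ L := hpair'.subset (by simp)
    constructor
    · intro hcol
      exact absurd ((Relation.TransGen.single hma).tail hcol.1) (hE m)
    · intro _
      exact hnotW m hmL
  -- nodup of the new path
  have hRnd' : (R1 ++ z :: R2).Nodup := by
    rw [← hR]; exact List.nodup_reverse.mpr hLnd
  obtain ⟨hndR1, hndzR2, hdisR⟩ := List.nodup_append.mp hRnd'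
  have hS1facts : S1.Nodup ∧ z ∉ S1 := by
    have h2 := hSnd
    rw [hS12] at h2
    obtain ⟨h1, _, h3⟩ := List.nodup_append.mp h2
    exact ⟨h1, fun hh => h3 z hh z (by simp) rfl⟩
  have hPnd : (R1 ++ z :: S1.reverse).Nodup := by
    rw [List.nodup_append]
    refine ⟨hndR1, ?_, ?_⟩
    · rw [List.nodup_cons]
      exact ⟨fun hh => hS1facts.2 (List.mem_reverse.mp hh), List.nodup_reverse.mpr hS1facts.1⟩
    · intro r hrR1 y_ hrzS1 hry
      subst hry
      have hrS : r ∉ s ++ [a, c] := hR1 r hrR1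
      rcases List.mem_cons.mp hrzS1 with rfl | hr'
      · exact hrS hzS
      · exact hrS (by rw [hS12]; exact List.mem_append_left _ (List.mem_reverse.mp hr'))
  -- chain of the new path
  have hRch : List.Chain' (flip E) L.reverse := List.isChain_reverse.mpr hLch
  have hch1 : List.Chain' (Adjacent E) (R1 ++ [z]) :=
    (hRch.prefix hprefR).imp fun a' b' h => Or.inr h
  have hchS : List.Chain' (Adjacent E) (s ++ [a, c]) := hch.prefix hSpre
  have hchS1z : List.Chain' (Adjacent E) (S1 ++ [z]) :=
    hchS.prefix ⟨S2, by rw [hS12]; simp⟩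
  have hchrev : List.Chain' (Adjacent E) (z :: S1.reverse) := by
    have h2 : List.Chain' (Adjacent E) ((S1 ++ [z]).reverse) :=
      List.isChain_reverse.mpr (hchS1z.imp fun a' b' h => h.symm)
    simpa using h2
  obtain ⟨hchR1, -, hbd⟩ := List.isChain_append.mp hch1
  have hPch : List.Chain' (Adjacent E) (R1 ++ z :: S1.reverse) := by
    refine List.isChain_append.mpr ?_
    refine ⟨hchR1, hchrev, ?_⟩
    intro x_ hx y_ hy
    simp only [List.head?_cons, Option.mem_def, Option.some.injEq] at hy
    subst hy
    exact hbd x_ hx z (by simp)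
  -- endpoints
  have hheadR : (L.reverse).head? = some x := by
    rw [List.head?_reverse]; exact hLlast
  have hheadP : (R1 ++ z :: S1.reverse).head? = some x := by
    rcases R1 with _ | ⟨y, R1'⟩
    · rw [hR] at hheadR
      simp only [List.nil_append, List.head?_cons, Option.some.injEq] at hheadR ⊢
      exact hheadR
    · rw [hR] at hheadR
      simp only [List.cons_append, List.head?_cons, Option.some.injEq] at hheadR ⊢
      exact hheadR
  have hheadS : (s ++ [a, c]).head? = some u := by
    rw [hp] at hhead
    rcases s with _ | ⟨y, s'⟩
    · simpa using hhead
    · simpa using hhead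
  have hlastP : (R1 ++ z :: S1.reverse).getLast? = some u := by
    rw [hS12] at hheadS
    rcases S1 with _ | ⟨w, S1'⟩
    · have hzu : z = u := by simpa using hheadS
      subst hzu
      simp [List.getLast?_concat]
    · have hwu : w = u := by simpa using hheadS
      rw [show R1 ++ z :: (w :: S1').reverse = (R1 ++ z :: S1'.reverse) ++ [w] by simp,
        List.getLast?_concat, hwu]
  -- the new path is d-connecting given W
  have hPdc : IsDConnectingPath E W (R1 ++ z :: S1.reverse) := by
    intro a' m b' htrip
    have htrip' : [a', m, b'] <:+: (R1 ++ [z]) ++ S1.reverse := by simpa using htrip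
    rcases triple_infix_append htrip' with h | h | h | h
    · -- entirely in the reversed directed part
      have h1 : [a', m] <:+: R1 ++ [z] := (List.IsPrefix.isInfix ⟨[b'], rfl⟩).trans h
      exact hRtrip a' m b' (h1.trans hprefR.isInfix)
    · -- entirely in the reversed initial segment
      have h' : [b', m, a'] <:+: S1 := by
        rw [← List.reverse_infix]; simpa using h
      obtain ⟨s', t', hst⟩ := h'
      have hp' : p = s' ++ b' :: m :: a' :: (t' ++ z :: S2 ++ b :: t) := by
        rw [hpS, hS12, ← hst]; simp
      have hlen : s'.length < Nat.find hex := by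
        have e1 : (s ++ [a, c]).length = (S1 ++ z :: S2).length := by rw [hS12]
        have e2 : (s' ++ [b', m, a'] ++ t').length = S1.length := by rw [hst]
        simp only [List.length_append, List.length_cons, List.length_nil] at e1 e2
        omega
      have hkey := key s' b' m a' _ hlen hp'
      exact ⟨fun hcol => hkey.1 ⟨hcol.2, hcol.1⟩,
        fun hncol => hkey.2 fun hc => hncol ⟨hc.2, hc.1⟩⟩
    · -- junction with middle vertex in the directed part
      obtain ⟨hs, -⟩ := h
      exact hRtrip a' m b' (hs.isInfix.trans hprefR.isInfix)
    · -- junction with middle vertex the last element of S1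
      obtain ⟨hlast', hpre⟩ := h
      have haz : a' = z := by
        rw [List.getLast?_concat] at hlast'
        exact (Option.some.inj hlast').symm
      obtain ⟨rest, hrest⟩ := hpre
      have hS1 : S1 = rest.reverse ++ [b', m] := by
        have h2 := congrArg List.reverse hrest
        simpa using h2.symm
      have hp' : p = rest.reverse ++ b' :: m :: z :: (S2 ++ b :: t) := by
        rw [hpS, hS12, hS1]; simp
      have hlen : rest.reverse.length < Nat.find hex := by
        have e1 : (s ++ [a, c]).length = (S1 ++ z :: S2).length := by rw [hS12]
        have e2 : S1.length = (rest.reverse ++ [b', m]).length := by rw [hS1]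
        simp only [List.length_append, List.length_cons, List.length_nil,
          List.length_reverse] at e1 e2 ⊢
        omega
      have hkey := key rest.reverse b' m z _ hlen hp'
      subst haz
      exact ⟨fun hcol => hkey.1 ⟨hcol.2, hcol.1⟩,
        fun hncol => hkey.2 fun hc => hncol ⟨hc.2, hc.1⟩⟩
  exact ⟨R1 ++ z :: S1.reverse, ⟨hPnd, hPch⟩, hheadP, hlastP, hPdc⟩

end Aux

/-- step of the proof of Lemma 2: if `u, v` are d-separated
given `W` but d-connected given `W ∪ {x}`, then `x` is d-connected to both `u`
and `v` given `W`. -/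
theorem stmt14 [Fintype V] (E : V → V → Prop) (hE : Acyclic E) (u v x : V) (W : Set V)
    (huv : u ≠ v) (hux : u ≠ x) (hvx : v ≠ x)
    (hWu : u ∉ W) (hWv : v ∉ W) (hWx : x ∉ W)
    (hsep : DSep E W u v) (hconn : DConn E (W ∪ {x}) u v) :
    DConn E W x u ∧ DConn E W x v := by
  exact ⟨dconn_step hE hsep hconn,
    dconn_step hE (fun hc => hsep hc.symm) hconn.symm⟩
end
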